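/- arXiv:2209.14884 — 3 statements merged into one kernel-verified Lean document; each statement's English description precedes it below -/
import Mathlib

section
/- (Contrastive induced kernel lower bound) Under the pairwise-augmentation setup, suppose indices i, j satisfy A_{ij} = 1, and points x, x' satisfy ‖Φ(x) - Φ(x_i)‖_H ≤ Δ/(5‖K_{s,s}^{-1}‖√N) and ‖Φ(x') - Φ(x_j)‖_H ≤ Δ/(5‖K_{s,s}^{-1}‖√N) for some Δ ∈ (0,1]. Then the induced kernel k*(x,x') = k_{x,s} K_{s,s}^{-1} (I + A) K_{s,s}^{-1} k_{s,x'} satisfies k*(x,x') ≥ 1 - Δ. -/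
open Matrix RealInnerProductSpace

private lemma aux_opnorm {N : ℕ} (M : Matrix (Fin N) (Fin N) ℝ) (u : Fin N → ℝ) :
    ‖(WithLp.equiv 2 (Fin N → ℝ)).symm (M.mulVec u)‖ ≤
      ‖Matrix.toEuclideanCLM (𝕜 := ℝ) (n := Fin N) M‖ * ‖(WithLp.equiv 2 (Fin N → ℝ)).symm u‖ := by
  rw [show M.mulVec u = Matrix.toLin' M u from rfl, show (WithLp.equiv 2 (Fin N → ℝ)).symm (Matrix.toLin' M u) = Matrix.toEuclideanCLM (𝕜 := ℝ) M ((WithLp.equiv 2 (Fin N → ℝ)).symm u) from rfl]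
  exact (Matrix.toEuclideanCLM (𝕜 := ℝ) M).le_opNorm _

private lemma aux_cs {N : ℕ} (a b : Fin N → ℝ) :
    |a ⬝ᵥ b| ≤ ‖(WithLp.equiv 2 (Fin N → ℝ)).symm a‖ * ‖(WithLp.equiv 2 (Fin N → ℝ)).symm b‖ := by
  rw [show a ⬝ᵥ b = ⟪(WithLp.equiv 2 (Fin N → ℝ)).symm a, (WithLp.equiv 2 (Fin N → ℝ)).symm b⟫ by
    rw [PiLp.inner_apply]; simp [dotProduct, mul_comm]]
  exact abs_real_inner_le_norm _ _

private lemma aux_sup {N : ℕ} (u : Fin N → ℝ) (c : ℝ) (hc : 0 ≤ c) (h : ∀ m, |u m| ≤ c) :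
    ‖(WithLp.equiv 2 (Fin N → ℝ)).symm u‖ ≤ Real.sqrt N * c := by
  rw [EuclideanSpace.norm_eq]
  calc Real.sqrt (∑ m, ‖u m‖^2) ≤ Real.sqrt (N * c^2) := by
        apply Real.sqrt_le_sqrt
        calc (∑ m, ‖u m‖^2) ≤ ∑ _m : Fin N, c^2 := by
              refine Finset.sum_le_sum fun m _ => ?_
              have : ‖u m‖ ≤ c := by rw [Real.norm_eq_abs]; exact h m
              nlinarith [norm_nonneg (u m)]
          _ = N * c^2 := by simp [mul_comm]
    _ = Real.sqrt N * c := by rw [Real.sqrt_mul (by positivity), Real.sqrt_sq hc]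

private lemma aux_comp {N : ℕ} (u : Fin N → ℝ) (m : Fin N) :
    |u m| ≤ ‖(WithLp.equiv 2 (Fin N → ℝ)).symm u‖ := by
  rw [EuclideanSpace.norm_eq,
    show |u m| = Real.sqrt (‖u m‖^2) by rw [Real.sqrt_sq_eq_abs, Real.norm_eq_abs, abs_abs]]
  exact Real.sqrt_le_sqrt <|
    Finset.single_le_sum (f := fun k => ‖u k‖^2) (fun k _ => by positivity) (Finset.mem_univ m)

private lemma aux_addE {N : ℕ} (a b : Fin N → ℝ) :
    ‖(WithLp.equiv 2 (Fin N → ℝ)).symm (a + b)‖ ≤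
      ‖(WithLp.equiv 2 (Fin N → ℝ)).symm a‖ + ‖(WithLp.equiv 2 (Fin N → ℝ)).symm b‖ := by
  simpa using norm_add_le ((WithLp.equiv 2 (Fin N → ℝ)).symm a) ((WithLp.equiv 2 (Fin N → ℝ)).symm b)

private lemma aux_perm {N : ℕ} (σ : Equiv.Perm (Fin N)) (u : Fin N → ℝ) :
    ‖(WithLp.equiv 2 (Fin N → ℝ)).symm (fun m => u (σ m))‖ =
      ‖(WithLp.equiv 2 (Fin N → ℝ)).symm u‖ := by
  rw [EuclideanSpace.norm_eq, EuclideanSpace.norm_eq]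
  congr 1
  exact Equiv.sum_comp σ (fun k => ‖u k‖^2)
/-- Contrastive induced kernel lower bound: if `x` and `x'` are close in kernel
space to two SSL datapoints related by an augmentation, then the induced kernel
`k*(x,x') = k_{x,s} K⁻¹ (I + A) K⁻¹ k_{s,x'}` is at least `1 - Δ`. -/
theorem stmt_7 {X : Type*} {H : Type*} [NormedAddCommGroup H] [InnerProductSpace ℝ H]
    {N : ℕ} (Φ : X → H) (pts : Fin N → X)
    (hnorm : ∀ m, ‖Φ (pts m)‖ = 1)
    (Ks : Matrix (Fin N) (Fin N) ℝ)
    (hKs : Ks = Matrix.of (fun i j : Fin N => ⟪Φ (pts i), Φ (pts j)⟫))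
    (hinv : IsUnit Ks.det)
    (σ : Equiv.Perm (Fin N)) (hfix : ∀ m, σ m ≠ m) (hinvol : ∀ m, σ (σ m) = m)
    (A : Matrix (Fin N) (Fin N) ℝ)
    (hA : A = Matrix.of (fun i j : Fin N => if σ i = j then (1 : ℝ) else 0))
    (kvec : X → (Fin N → ℝ))
    (hkvec : ∀ x, kvec x = fun m => ⟪Φ (pts m), Φ x⟫)
    (i j : Fin N) (hij : A i j = 1)
    (x x' : X) (Δ : ℝ) (hΔ : 0 < Δ) (hΔ1 : Δ ≤ 1)
    (hx : ‖Φ x - Φ (pts i)‖ ≤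
      Δ / (5 * ‖Matrix.toEuclideanCLM (𝕜 := ℝ) (n := Fin N) Ks⁻¹‖ * Real.sqrt N))
    (hx' : ‖Φ x' - Φ (pts j)‖ ≤
      Δ / (5 * ‖Matrix.toEuclideanCLM (𝕜 := ℝ) (n := Fin N) Ks⁻¹‖ * Real.sqrt N)) :
    1 - Δ ≤ kvec x ⬝ᵥ (Ks⁻¹ * (1 + A) * Ks⁻¹).mulVec (kvec x') := by
  set E : (Fin N → ℝ) → ℝ := fun w => ‖(WithLp.equiv 2 (Fin N → ℝ)).symm w‖ with hE
  set C := ‖Matrix.toEuclideanCLM (𝕜 := ℝ) (n := Fin N) Ks⁻¹‖ with hCdef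
  -- basic facts
  have hN0 : 0 < (N : ℝ) := by
    have : N ≠ 0 := fun h => (h ▸ i).elim0
    exact_mod_cast Nat.pos_of_ne_zero this
  have hsN : 0 < Real.sqrt N := Real.sqrt_pos.mpr hN0
  have hσ : σ i = j := by
    by_contra h
    rw [hA] at hij
    simp [h] at hij
  have hne : i ≠ j := fun h => hfix i (h ▸ hσ)
  have hσj : σ j = i := by rw [← hσ, hinvol]
  -- symmetry
  have hKsT : Ksᵀ = Ks := by
    rw [hKs]; ext m k
    simp [Matrix.transpose_apply, real_inner_comm]
  have hKiT : (Ks⁻¹)ᵀ = Ks⁻¹ := by rw [Matrix.transpose_nonsing_inv, hKsT]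
  have hAT : Aᵀ = A := by
    rw [hA]; ext m k
    simp only [Matrix.transpose_apply, Matrix.of_apply]
    congr 1
    simp only [eq_iff_iff]
    constructor
    · intro h; rw [← h, hinvol]
    · intro h; rw [← h, hinvol]
  -- C > 0
  have hKi0 : Ks⁻¹ ≠ 0 := by
    intro h0
    have h1 := Matrix.nonsing_inv_mul Ks hinv
    rw [h0, Matrix.zero_mul] at h1
    have h2 : (0 : Matrix (Fin N) (Fin N) ℝ) i i = (1 : Matrix (Fin N) (Fin N) ℝ) i i := by
      rw [h1]
    simp [Matrix.one_apply] at h2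
  have hC : 0 < C := by
    rw [hCdef]
    refine norm_pos_iff.mpr fun h => hKi0 ?_
    exact (Matrix.toEuclideanCLM (𝕜 := ℝ) (n := Fin N)).injective (h.trans (map_zero _).symm)
  have h5CN : 0 < 5 * C * Real.sqrt N := by positivity
  set ε := Δ / (5 * C * Real.sqrt N) with hεdef
  have hε0 : 0 ≤ ε := le_of_lt (div_pos hΔ h5CN)
  -- perturbation vectors
  set u : Fin N → ℝ := fun m => ⟪Φ (pts m), Φ x - Φ (pts i)⟫ with hudef
  set v : Fin N → ℝ := fun m => ⟪Φ (pts m), Φ x' - Φ (pts j)⟫ with hvdef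
  have hkx : kvec x = kvec (pts i) + u := by
    rw [hkvec, hkvec]; funext m
    simp only [Pi.add_apply, hudef, inner_sub_right]; ring
  have hkx' : kvec x' = kvec (pts j) + v := by
    rw [hkvec, hkvec]; funext m
    simp only [Pi.add_apply, hvdef, inner_sub_right]; ring
  have hub : ∀ m, |u m| ≤ ε := fun m => by
    calc |u m| ≤ ‖Φ (pts m)‖ * ‖Φ x - Φ (pts i)‖ := abs_real_inner_le_norm _ _
      _ = ‖Φ x - Φ (pts i)‖ := by rw [hnorm m, one_mul]
      _ ≤ ε := hx
  have hvb : ∀ m, |v m| ≤ ε := fun m => by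
    calc |v m| ≤ ‖Φ (pts m)‖ * ‖Φ x' - Φ (pts j)‖ := abs_real_inner_le_norm _ _
      _ = ‖Φ x' - Φ (pts j)‖ := by rw [hnorm m, one_mul]
      _ ≤ ε := hx'
  -- image vectors
  set u' := Ks⁻¹.mulVec u with hu'def
  set v' := Ks⁻¹.mulVec v with hv'def
  have hCNε : C * (Real.sqrt N * ε) = Δ / 5 := by
    rw [hεdef]
    field_simp
  have hEu' : E u' ≤ Δ / 5 := by
    calc E u' ≤ C * E u := aux_opnorm _ _
      _ ≤ C * (Real.sqrt N * ε) := by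
          exact mul_le_mul_of_nonneg_left (aux_sup u ε hε0 hub) (le_of_lt hC)
      _ = Δ / 5 := hCNε
  have hEv' : E v' ≤ Δ / 5 := by
    calc E v' ≤ C * E v := aux_opnorm _ _
      _ ≤ C * (Real.sqrt N * ε) := by
          exact mul_le_mul_of_nonneg_left (aux_sup v ε hε0 hvb) (le_of_lt hC)
      _ = Δ / 5 := hCNε
  -- basis vectors
  set ei : Fin N → ℝ := Pi.single i 1 with heidef
  set ej : Fin N → ℝ := Pi.single j 1 with hejdef
  have hKsei : Ks.mulVec ei = kvec (pts i) := by
    funext m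
    rw [hkvec]
    simp [Matrix.mulVec, dotProduct, heidef, Pi.single_apply, hKs]
  have hKsej : Ks.mulVec ej = kvec (pts j) := by
    funext m
    rw [hkvec]
    simp [Matrix.mulVec, dotProduct, hejdef, Pi.single_apply, hKs]
  have hKinv : Ks⁻¹ * Ks = 1 := Matrix.nonsing_inv_mul Ks hinv
  have hki : Ks⁻¹.mulVec (kvec (pts i)) = ei := by
    rw [← hKsei, Matrix.mulVec_mulVec, hKinv, Matrix.one_mulVec]
  have hkj : Ks⁻¹.mulVec (kvec (pts j)) = ej := by
    rw [← hKsej, Matrix.mulVec_mulVec, hKinv, Matrix.one_mulVec]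
  set M : Matrix (Fin N) (Fin N) ℝ := 1 + A with hMdef
  have hMT : Mᵀ = M := by rw [hMdef, Matrix.transpose_add, Matrix.transpose_one, hAT]
  -- rewrite target
  have hsplit : kvec x ⬝ᵥ (Ks⁻¹ * (1 + A) * Ks⁻¹).mulVec (kvec x') =
      (ei + u') ⬝ᵥ M.mulVec (ej + v') := by
    rw [show Ks⁻¹ * (1 + A) * Ks⁻¹ = Ks⁻¹ * (M * Ks⁻¹) by rw [hMdef, Matrix.mul_assoc],
      ← Matrix.mulVec_mulVec, Matrix.dotProduct_mulVec, ← Matrix.mulVec_transpose, hKiT,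
      ← Matrix.mulVec_mulVec, hkx, hkx', Matrix.mulVec_add, hki, Matrix.mulVec_add, hkj]
  rw [hsplit]
  -- action of M on basis vectors
  have hAw : ∀ w : Fin N → ℝ, A.mulVec w = fun m => w (σ m) := by
    intro w; funext m
    simp [hA, Matrix.mulVec, dotProduct, ite_mul]
  have hAej : A.mulVec ej = ei := by
    rw [hAw]; funext m
    simp only [hejdef, heidef, Pi.single_apply]
    by_cases hm : m = i
    · subst hm; simp [hσ]
    · have hs : σ m ≠ j := fun h => hm (by rw [← hinvol m, h, hσj])
      simp [hs, hm]
  have hAei : A.mulVec ei = ej := by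
    rw [hAw]; funext m
    simp only [hejdef, heidef, Pi.single_apply]
    by_cases hm : m = j
    · subst hm; simp [hσj]
    · have hs : σ m ≠ i := fun h => hm (by rw [← hinvol m, h, hσ])
      simp [hs, hm]
  have hMej : M.mulVec ej = ej + ei := by
    rw [hMdef, Matrix.add_mulVec, Matrix.one_mulVec, hAej]
  have hMei : M.mulVec ei = ei + ej := by
    rw [hMdef, Matrix.add_mulVec, Matrix.one_mulVec, hAei]
  -- expand
  have hexp : (ei + u') ⬝ᵥ M.mulVec (ej + v') =
      ei ⬝ᵥ M.mulVec ej + ei ⬝ᵥ M.mulVec v' + u' ⬝ᵥ M.mulVec ej + u' ⬝ᵥ M.mulVec v' := by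
    simp only [Matrix.mulVec_add, add_dotProduct, dotProduct_add]
    ring
  rw [hexp]
  -- main term
  have hmain : ei ⬝ᵥ M.mulVec ej = 1 := by
    rw [hMej, heidef]
    simp [single_dotProduct, Pi.add_apply, hejdef, Pi.single_apply, hne, Ne.symm hne]
  -- error bounds
  have hcomp : ∀ (w : Fin N → ℝ) (m : Fin N), |w m| ≤ E w := fun w m => aux_comp w m
  have ht2 : |ei ⬝ᵥ M.mulVec v'| ≤ 2 * (Δ / 5) := by
    rw [Matrix.dotProduct_mulVec, ← Matrix.mulVec_transpose, hMT, hMei]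
    have h1 : (ei + ej) ⬝ᵥ v' = v' i + v' j := by
      simp [add_dotProduct, heidef, hejdef, single_dotProduct]
    rw [h1]
    calc |v' i + v' j| ≤ |v' i| + |v' j| := abs_add_le _ _
      _ ≤ E v' + E v' := add_le_add (hcomp v' i) (hcomp v' j)
      _ ≤ Δ / 5 + Δ / 5 := add_le_add hEv' hEv'
      _ = 2 * (Δ / 5) := by ring
  have ht3 : |u' ⬝ᵥ M.mulVec ej| ≤ 2 * (Δ / 5) := by
    rw [hMej]
    have h1 : u' ⬝ᵥ (ej + ei) = u' j + u' i := by
      simp [dotProduct_add, heidef, hejdef, dotProduct_single]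
    rw [h1]
    calc |u' j + u' i| ≤ |u' j| + |u' i| := abs_add_le _ _
      _ ≤ E u' + E u' := add_le_add (hcomp u' j) (hcomp u' i)
      _ ≤ Δ / 5 + Δ / 5 := add_le_add hEu' hEu'
      _ = 2 * (Δ / 5) := by ring
  have hEMv' : E (M.mulVec v') ≤ 2 * (Δ / 5) := by
    have h1 : M.mulVec v' = v' + fun m => v' (σ m) := by
      rw [hMdef, Matrix.add_mulVec, Matrix.one_mulVec, hAw v']
    rw [h1]
    calc E (v' + fun m => v' (σ m)) ≤ E v' + E (fun m => v' (σ m)) := aux_addE _ _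
      _ = E v' + E v' := by rw [show (E fun m => v' (σ m)) = E v' from aux_perm σ v']
      _ ≤ Δ / 5 + Δ / 5 := add_le_add hEv' hEv'
      _ = 2 * (Δ / 5) := by ring
  have ht4 : |u' ⬝ᵥ M.mulVec v'| ≤ (Δ / 5) * (2 * (Δ / 5)) := by
    calc |u' ⬝ᵥ M.mulVec v'| ≤ E u' * E (M.mulVec v') := aux_cs _ _
      _ ≤ (Δ / 5) * (2 * (Δ / 5)) := by
          refine mul_le_mul hEu' hEMv' (norm_nonneg _) ?_
          positivity
  rw [hmain]
  have h2 := abs_le.mp ht2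
  have h3 := abs_le.mp ht3
  have h4 := abs_le.mp ht4
  nlinarith [h2.1, h3.1, h4.1, sq_nonneg Δ]
end

section
/- (KKT verification, contrastive case) Let X ∈ ℝ^{N×D}, let X⁺ be its Moore–Penrose pseudoinverse, and let P ∈ ℝ^{N×N} be symmetric PSD with column space contained in the row space of XXᵀ (i.e., XX⁺ P = P). Define B* = X⁺ P (X⁺)ᵀ and Y* = (X⁺)ᵀ X⁺. Then: (a) X B* Xᵀ = P; (b) B* ⪰ 0; (c) (I_D - Xᵀ Y* X) B* = 0. -/
open Matrix

/-- KKT verification (contrastive case): with `B* = X⁺ P (X⁺)ᵀ` and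
`Y* = (X⁺)ᵀ X⁺`, primal feasibility `X B* Xᵀ = P`, `B* ⪰ 0`, and complementary
slackness `(I - Xᵀ Y* X) B* = 0` hold. -/
theorem stmt_10 {N D : ℕ}
    (X : Matrix (Fin N) (Fin D) ℝ) (Xp : Matrix (Fin D) (Fin N) ℝ)
    (h1 : X * Xp * X = X) (h2 : Xp * X * Xp = Xp)
    (h3 : (X * Xp)ᵀ = X * Xp) (h4 : (Xp * X)ᵀ = Xp * X)
    (P : Matrix (Fin N) (Fin N) ℝ) (hP : P.PosSemidef)
    (hrange : X * Xp * P = P)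
    (Bstar : Matrix (Fin D) (Fin D) ℝ) (hB : Bstar = Xp * P * Xpᵀ)
    (Ystar : Matrix (Fin N) (Fin N) ℝ) (hY : Ystar = Xpᵀ * Xp) :
    X * Bstar * Xᵀ = P ∧
    Bstar.PosSemidef ∧
    (1 - Xᵀ * Ystar * X) * Bstar = 0 := by
  have hPsymm : Pᵀ = P := hP.1.eq
  have hrange' : P * (X * Xp) = P := by
    have := congrArg Matrix.transpose hrange
    simpa [Matrix.transpose_mul, h3, hPsymm] using this
  subst hB hY
  refine ⟨?_, ?_, ?_⟩
  · calc X * (Xp * P * Xpᵀ) * Xᵀ = (X * Xp * P) * (X * Xp)ᵀ := by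
          rw [Matrix.transpose_mul]; simp only [Matrix.mul_assoc]
      _ = P := by rw [hrange, h3, hrange']
  · have := hP.mul_mul_conjTranspose_same Xp
    simpa using this
  · have h4' : Xᵀ * Xpᵀ = Xp * X := by rw [← Matrix.transpose_mul, h4]
    have key : Xᵀ * (Xpᵀ * Xp) * X * (Xp * P * Xpᵀ) = Xp * P * Xpᵀ := by
      simp only [← Matrix.mul_assoc]
      rw [h4', h2, h2]
    rw [sub_mul, key, one_mul, sub_self]
end

section
/- For a symmetric positive semidefinite matrix S ∈ ℝ^{N×N} and a symmetric matrix T ∈ ℝ^{N×N} with spectral decomposition T = Σ_i λ_i v_i v_iᵀ, the Frobenius distance ‖S - T‖_F² is minimized over all PSD matrices S of rank at most K by S = Σ over the K indices with largest positive λ_i of λ_i v_i v_iᵀ (where negative λ_i are replaced by 0), i.e., projecting T onto its top-K positive eigenspace. -/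
open Matrix Finset

namespace EY14
variable {N : ℕ}

lemma trace_tmul (A : Matrix (Fin N) (Fin N) ℝ) :
    (Aᵀ * A).trace = ∑ a, ∑ b, (A a b)^2 := by
  rw [Matrix.trace]
  simp only [Matrix.diag_apply, Matrix.mul_apply, Matrix.transpose_apply, sq]
  exact Finset.sum_comm

lemma key_sum_ineq {K : ℕ} (c p : Fin N → ℝ)
    (hc0 : ∀ i, 0 ≤ c i) (hmono : ∀ i j : Fin N, i ≤ j → c j ≤ c i)
    (hp0 : ∀ i, 0 ≤ p i) (hp1 : ∀ i, p i ≤ 1)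
    (hsum : (N : ℝ) - K ≤ ∑ i, p i) :
    ∑ i ∈ Finset.univ.filter (fun i : Fin N => ¬ (i : ℕ) < K), c i ≤ ∑ i, c i * p i := by
  by_cases hKN : N ≤ K
  · have he : Finset.univ.filter (fun i : Fin N => ¬ (i : ℕ) < K) = ∅ := by
      ext i
      simp [lt_of_lt_of_le i.2 hKN]
    rw [he, Finset.sum_empty]
    exact Finset.sum_nonneg fun i _ => mul_nonneg (hc0 i) (hp0 i)
  · push_neg at hKN
    set k : Fin N := ⟨K, hKN⟩ with hk
    set F := Finset.univ.filter (fun i : Fin N => ¬ (i : ℕ) < K) with hF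
    set G := Finset.univ.filter (fun i : Fin N => (i : ℕ) < K) with hG
    have hsplit : ∑ i, c i * p i = ∑ i ∈ G, c i * p i + ∑ i ∈ F, c i * p i :=
      (Finset.sum_filter_add_sum_filter_not _ _ _).symm
    have hsplitp : ∑ i, p i = ∑ i ∈ G, p i + ∑ i ∈ F, p i :=
      (Finset.sum_filter_add_sum_filter_not _ _ _).symm
    have h1 : c k * ∑ i ∈ G, p i ≤ ∑ i ∈ G, c i * p i := by
      rw [Finset.mul_sum]
      refine Finset.sum_le_sum fun i hi => ?_
      have hik : i ≤ k := by
        have : (i : ℕ) < K := by simpa [hG] using hi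
        exact le_of_lt this
      exact mul_le_mul_of_nonneg_right (hmono i k hik) (hp0 i)
    have h2 : ∑ i ∈ F, c i - c k * ((F.card : ℝ) - ∑ i ∈ F, p i) ≤ ∑ i ∈ F, c i * p i := by
      have : ∀ i ∈ F, c i - c k * (1 - p i) ≤ c i * p i := by
        intro i hi
        have hki : k ≤ i := by
          have : ¬ (i : ℕ) < K := by simpa [hF] using hi
          exact le_of_not_gt this
        have hci : c i ≤ c k := hmono k i hki
        nlinarith [hp1 i, hp0 i]
      calc ∑ i ∈ F, c i - c k * ((F.card : ℝ) - ∑ i ∈ F, p i)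
          = ∑ i ∈ F, (c i - c k * (1 - p i)) := by
            rw [Finset.sum_sub_distrib, ← Finset.mul_sum, Finset.sum_sub_distrib,
              Finset.sum_const, nsmul_eq_mul, mul_one]
        _ ≤ ∑ i ∈ F, c i * p i := Finset.sum_le_sum this
    have hGcard : K ≤ G.card := by
      rw [hG]
      calc K = (Finset.univ : Finset (Fin K)).card := by simp
        _ ≤ _ := Finset.card_le_card_of_injOn (Fin.castLE hKN.le)
            (fun a _ => by simpa using a.2) (Fin.castLE_injective hKN.le).injOn
    have hGF : G.card + F.card = N := by
      have := Finset.card_filter_add_card_filter_not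
        (s := (Finset.univ : Finset (Fin N))) (p := fun i : Fin N => (i : ℕ) < K)
      simpa [hF, hG] using this
    have hFcard : (F.card : ℝ) ≤ (N : ℝ) - K := by
      have : F.card + K ≤ N := by omega
      have := Nat.cast_le (α := ℝ) |>.mpr this
      push_cast at this
      linarith
    have hck : 0 ≤ c k := hc0 k
    nlinarith [hsum, hsplit, hsplitp, h1, h2]

lemma spectral_lower_bound {K : ℕ} (lam : Fin N → ℝ)
    (hlam : ∀ i j : Fin N, i ≤ j → lam j ≤ lam i)
    (M : Matrix (Fin N) (Fin N) ℝ) (hM : M.PosSemidef) (hrank : M.rank ≤ K) :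
    ∑ i : Fin N, ((if (i : ℕ) < K then max (lam i) 0 else 0) - lam i)^2
      ≤ ((M - Matrix.diagonal lam)ᵀ * (M - Matrix.diagonal lam)).trace := by
  classical
  have hH : M.IsHermitian := hM.1
  set U : Matrix (Fin N) (Fin N) ℝ := (hH.eigenvectorUnitary : Matrix (Fin N) (Fin N) ℝ) with hUdef
  set μ : Fin N → ℝ := hH.eigenvalues with hμdef
  have hμ0 : ∀ j, 0 ≤ μ j := fun j => hM.eigenvalues_nonneg j
  have hspec : M = U * Matrix.diagonal μ * Uᵀ := by
    have h := hH.spectral_theorem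
    simpa [Matrix.star_eq_conjTranspose,
      Matrix.conjTranspose_eq_transpose_of_trivial] using h
  have hU1 : U * Uᵀ = 1 := by
    have h := Matrix.mem_unitaryGroup_iff.mp hH.eigenvectorUnitary.2
    simpa [Matrix.star_eq_conjTranspose,
      Matrix.conjTranspose_eq_transpose_of_trivial] using h
  have hU2 : Uᵀ * U = 1 := by
    have h := Matrix.mem_unitaryGroup_iff'.mp hH.eigenvectorUnitary.2
    simpa [Matrix.star_eq_conjTranspose,
      Matrix.conjTranspose_eq_transpose_of_trivial] using h
  have hrow : ∀ a, ∑ j, (U a j)^2 = 1 := by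
    intro a
    have h := Matrix.ext_iff.mpr hU1 a a
    simp only [Matrix.mul_apply, Matrix.transpose_apply, Matrix.one_apply_eq] at h
    simpa [sq] using h
  have hcol : ∀ j, ∑ a, (U a j)^2 = 1 := by
    intro j
    have h := Matrix.ext_iff.mpr hU2 j j
    simp only [Matrix.mul_apply, Matrix.transpose_apply, Matrix.one_apply_eq] at h
    simpa [sq] using h
  have hMe : ∀ a b, M a b = ∑ j, U a j * μ j * U b j := by
    intro a b
    have h := Matrix.ext_iff.mpr hspec a b
    rw [h, Matrix.mul_apply]
    refine Finset.sum_congr rfl fun j _ => ?_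
    rw [Matrix.mul_diagonal, Matrix.transpose_apply]
  have hrk : (Finset.univ.filter (fun j => μ j ≠ 0)).card ≤ K := by
    have h1 : M.rank = Fintype.card {j // μ j ≠ 0} := hH.rank_eq_card_non_zero_eigs
    have h2 : Fintype.card {j // μ j ≠ 0} = (Finset.univ.filter (fun j => μ j ≠ 0)).card :=
      Fintype.card_subtype _
    omega
  -- the three quantities
  set Sμ : ℝ := ∑ j, (μ j)^2 with hSμ
  set SC : ℝ := ∑ a, ∑ j, (U a j)^2 * (lam a * μ j) with hSC
  set Sl : ℝ := ∑ a, (lam a)^2 with hSl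
  have hsum3 : ∀ (f g h : Fin N → ℝ), ∑ b, (f b - 2*(g b) + h b)
      = (∑ b, f b) - 2*(∑ b, g b) + ∑ b, h b := by
    intro f g h
    rw [Finset.sum_add_distrib, Finset.sum_sub_distrib, Finset.mul_sum]
  have E1 : ∑ a, ∑ b, (M a b)^2 = Sμ := by
    rw [← trace_tmul]
    have hMt : Mᵀ = M := by
      rw [← Matrix.conjTranspose_eq_transpose_of_trivial]; exact hH
    rw [hMt]
    have hMM : M * M = U * (Matrix.diagonal μ * Matrix.diagonal μ) * Uᵀ := by
      rw [hspec]
      simp only [Matrix.mul_assoc]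
      rw [← Matrix.mul_assoc Uᵀ U, hU2, Matrix.one_mul]
    rw [hMM, Matrix.trace_mul_comm, ← Matrix.mul_assoc, hU2, Matrix.one_mul]
    simp only [Matrix.diagonal_mul_diagonal, Matrix.trace_diagonal]
    rw [hSμ]
    exact Finset.sum_congr rfl fun j _ => (pow_two (μ j)).symm
  have E2 : ∑ a, ∑ b, (M a b * Matrix.diagonal lam a b) = SC := by
    rw [hSC]
    refine Finset.sum_congr rfl fun a _ => ?_
    have hinner : ∑ b, (M a b * Matrix.diagonal lam a b) = M a a * lam a := by
      simp [Matrix.diagonal_apply, mul_ite, mul_zero]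
    rw [hinner, hMe a a, Finset.sum_mul]
    refine Finset.sum_congr rfl fun j _ => ?_
    ring
  have E3 : ∑ a, ∑ b, (Matrix.diagonal lam a b)^2 = Sl := by
    rw [hSl]
    refine Finset.sum_congr rfl fun a _ => ?_
    simp [Matrix.diagonal_apply, sq, ite_mul, mul_ite, mul_zero, zero_mul]
  have Erow : ∀ a, ∑ j, (U a j)^2 * (lam a)^2 = (lam a)^2 := by
    intro a
    rw [← Finset.sum_mul, hrow a, one_mul]
  have Ecol : ∑ a, ∑ j, (U a j)^2 * (μ j)^2 = Sμ := by
    rw [Finset.sum_comm, hSμ]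
    refine Finset.sum_congr rfl fun j _ => ?_
    rw [← Finset.sum_mul, hcol j, one_mul]
  have L : ((M - Matrix.diagonal lam)ᵀ * (M - Matrix.diagonal lam)).trace
      = Sμ - 2*SC + Sl := by
    rw [trace_tmul]
    have h1 : ∀ a, ∑ b, ((M - Matrix.diagonal lam) a b)^2
        = (∑ b, (M a b)^2) - 2*(∑ b, M a b * Matrix.diagonal lam a b)
          + ∑ b, (Matrix.diagonal lam a b)^2 := by
      intro a
      rw [← hsum3]
      refine Finset.sum_congr rfl fun b _ => ?_
      simp only [Matrix.sub_apply]
      ring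
    calc ∑ a, ∑ b, ((M - Matrix.diagonal lam) a b)^2
        = ∑ a, ((∑ b, (M a b)^2) - 2*(∑ b, M a b * Matrix.diagonal lam a b)
          + ∑ b, (Matrix.diagonal lam a b)^2) := Finset.sum_congr rfl fun a _ => h1 a
      _ = (∑ a, ∑ b, (M a b)^2) - 2*(∑ a, ∑ b, M a b * Matrix.diagonal lam a b)
          + ∑ a, ∑ b, (Matrix.diagonal lam a b)^2 := hsum3 _ _ _
      _ = Sμ - 2*SC + Sl := by rw [E1, E2, E3]
  have R : ∑ a, ∑ j, (U a j)^2 * (μ j - lam a)^2 = Sμ - 2*SC + Sl := by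
    have h1 : ∀ a, ∑ j, (U a j)^2 * (μ j - lam a)^2
        = (∑ j, (U a j)^2 * (μ j)^2) - 2*(∑ j, (U a j)^2 * (lam a * μ j))
          + ∑ j, (U a j)^2 * (lam a)^2 := by
      intro a
      rw [← hsum3]
      refine Finset.sum_congr rfl fun j _ => ?_
      ring
    calc ∑ a, ∑ j, (U a j)^2 * (μ j - lam a)^2
        = ∑ a, ((∑ j, (U a j)^2 * (μ j)^2) - 2*(∑ j, (U a j)^2 * (lam a * μ j))
          + ∑ j, (U a j)^2 * (lam a)^2) := Finset.sum_congr rfl fun a _ => h1 a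
      _ = (∑ a, ∑ j, (U a j)^2 * (μ j)^2) - 2*SC + ∑ a, ∑ j, (U a j)^2 * (lam a)^2 := by
          rw [hsum3]
      _ = Sμ - 2*SC + Sl := by
          rw [Ecol]
          congr 1
          rw [hSl]
          exact Finset.sum_congr rfl fun a _ => Erow a
  -- pointwise lower bound
  set Z : Finset (Fin N) := Finset.univ.filter (fun j => μ j = 0) with hZ
  set p : Fin N → ℝ := fun a => ∑ j ∈ Z, (U a j)^2 with hp
  have pb : ∀ a j, (U a j)^2 * (min (lam a) 0)^2
      + (if μ j = 0 then (U a j)^2 * (max (lam a) 0)^2 else 0)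
      ≤ (U a j)^2 * (μ j - lam a)^2 := by
    intro a j
    by_cases h : μ j = 0
    · rw [if_pos h, h]
      have he : (min (lam a) 0)^2 + (max (lam a) 0)^2 = (0 - lam a)^2 := by
        rcases le_total (lam a) 0 with hl | hl
        · rw [min_eq_left hl, max_eq_right hl]; ring
        · rw [min_eq_right hl, max_eq_left hl]; ring
      nlinarith [sq_nonneg (U a j)]
    · rw [if_neg h, add_zero]
      have hμj : 0 < μ j := lt_of_le_of_ne (hμ0 j) (Ne.symm h)
      have hle : (min (lam a) 0)^2 ≤ (μ j - lam a)^2 := by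
        rcases le_total (lam a) 0 with hl | hl
        · rw [min_eq_left hl]; nlinarith
        · rw [min_eq_right hl]; simpa using sq_nonneg (μ j - lam a)
      nlinarith [sq_nonneg (U a j)]
  have hinner2 : ∀ a, (min (lam a) 0)^2 + (max (lam a) 0)^2 * p a
      ≤ ∑ j, (U a j)^2 * (μ j - lam a)^2 := by
    intro a
    have hA : ∑ j, (U a j)^2 * (min (lam a) 0)^2 = (min (lam a) 0)^2 := by
      rw [← Finset.sum_mul, hrow a, one_mul]
    have hB : ∑ j, (if μ j = 0 then (U a j)^2 * (max (lam a) 0)^2 else 0)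
        = (max (lam a) 0)^2 * p a := by
      rw [← Finset.sum_filter, ← hZ, hp, Finset.mul_sum]
      exact Finset.sum_congr rfl fun j _ => by ring
    calc (min (lam a) 0)^2 + (max (lam a) 0)^2 * p a
        = ∑ j, ((U a j)^2 * (min (lam a) 0)^2
            + (if μ j = 0 then (U a j)^2 * (max (lam a) 0)^2 else 0)) := by
          rw [Finset.sum_add_distrib, hA, hB]
      _ ≤ ∑ j, (U a j)^2 * (μ j - lam a)^2 := Finset.sum_le_sum fun j _ => pb a j
  have hp0 : ∀ a, 0 ≤ p a := fun a => Finset.sum_nonneg fun j _ => sq_nonneg _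
  have hp1 : ∀ a, p a ≤ 1 := by
    intro a
    calc p a ≤ ∑ j, (U a j)^2 :=
        Finset.sum_le_sum_of_subset_of_nonneg (Finset.subset_univ Z) (fun j _ _ => sq_nonneg _)
      _ = 1 := hrow a
  have hpsum : (N : ℝ) - K ≤ ∑ a, p a := by
    have h1 : ∑ a, p a = (Z.card : ℝ) := by
      simp only [hp]
      rw [Finset.sum_comm]
      simp [hcol]
    have h2 : Z.card + (Finset.univ.filter (fun j => ¬ μ j = 0)).card = N := by
      have h := Finset.card_filter_add_card_filter_not
        (s := (Finset.univ : Finset (Fin N))) (p := fun j : Fin N => μ j = 0)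
      simpa [hZ] using h
    have h2' : (Finset.univ.filter (fun j => ¬ μ j = 0)).card
        = (Finset.univ.filter (fun j => μ j ≠ 0)).card := rfl
    have h3 : N ≤ Z.card + K := by omega
    rw [h1]
    have h4 := (Nat.cast_le (α := ℝ)).mpr h3
    push_cast at h4
    linarith
  have hinner2' := hinner2
  set c : Fin N → ℝ := fun a => (max (lam a) 0)^2 with hc
  have hkey := key_sum_ineq c p (fun i => sq_nonneg _)
    (fun i j hij => by
      have h0 : (0:ℝ) ≤ max (lam j) 0 := le_max_right _ _
      have h1 : max (lam j) 0 ≤ max (lam i) 0 := max_le_max (hlam i j hij) le_rfl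
      exact pow_le_pow_left₀ h0 h1 2)
    hp0 hp1 hpsum
  have hval : ∀ i : Fin N, ((if (i : ℕ) < K then max (lam i) 0 else 0) - lam i)^2
      = (min (lam i) 0)^2 + (if (i : ℕ) < K then 0 else c i) := by
    intro i
    by_cases h : (i : ℕ) < K
    · rw [if_pos h, if_pos h, add_zero]
      rcases le_total (lam i) 0 with hl | hl
      · rw [max_eq_right hl, min_eq_left hl]; ring
      · rw [max_eq_left hl, min_eq_right hl]; ring
    · rw [if_neg h, if_neg h]
      show _ = _ + (max (lam i) 0)^2
      rcases le_total (lam i) 0 with hl | hl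
      · rw [min_eq_left hl, max_eq_right hl]; ring
      · rw [min_eq_right hl, max_eq_left hl]; ring
  calc ∑ i : Fin N, ((if (i : ℕ) < K then max (lam i) 0 else 0) - lam i)^2
      = ∑ i : Fin N, ((min (lam i) 0)^2 + (if (i : ℕ) < K then 0 else c i)) :=
        Finset.sum_congr rfl fun i _ => hval i
    _ = (∑ i : Fin N, (min (lam i) 0)^2)
        + ∑ i ∈ Finset.univ.filter (fun i : Fin N => ¬ (i : ℕ) < K), c i := by
        rw [Finset.sum_add_distrib]
        congr 1
        rw [Finset.sum_filter]
        exact Finset.sum_congr rfl fun i _ => by rw [ite_not]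
    _ ≤ (∑ i : Fin N, (min (lam i) 0)^2) + ∑ a : Fin N, c a * p a := by linarith [hkey]
    _ ≤ ∑ a : Fin N, ∑ j : Fin N, (U a j)^2 * (μ j - lam a)^2 := by
        rw [← Finset.sum_add_distrib]
        exact Finset.sum_le_sum fun a _ => hinner2 a
    _ = Sμ - 2*SC + Sl := R
    _ = ((M - Matrix.diagonal lam)ᵀ * (M - Matrix.diagonal lam)).trace := L.symm
lemma sum_smul_vecMulVec (v : Fin N → (Fin N → ℝ)) (w : Fin N → ℝ) :
    ∑ i, w i • Matrix.vecMulVec (v i) (v i)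
      = (Matrix.of fun i j => v i j)ᵀ * Matrix.diagonal w * (Matrix.of fun i j => v i j) := by
  have hdm : Matrix.diagonal w * (Matrix.of fun i j => v i j)
      = Matrix.of fun i j => w i * v i j := by
    ext a b
    simp [Matrix.diagonal_mul]
  rw [Matrix.mul_assoc, hdm]
  ext a b
  simp only [Matrix.sum_apply, Matrix.smul_apply, Matrix.vecMulVec_apply, Matrix.mul_apply,
    Matrix.transpose_apply, Matrix.of_apply, smul_eq_mul]
  exact Finset.sum_congr rfl fun i _ => by ring

lemma trace_conj {P E : Matrix (Fin N) (Fin N) ℝ} (hP : P * Pᵀ = 1) :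
    ((Pᵀ * E * P)ᵀ * (Pᵀ * E * P)).trace = (Eᵀ * E).trace := by
  have h1 : (Pᵀ * E * P)ᵀ = Pᵀ * Eᵀ * P := by
    rw [Matrix.transpose_mul, Matrix.transpose_mul, Matrix.transpose_transpose,
      Matrix.mul_assoc]
  have h2 : Pᵀ * Eᵀ * P * (Pᵀ * E * P) = Pᵀ * (Eᵀ * E) * P := by
    simp only [Matrix.mul_assoc]
    rw [← Matrix.mul_assoc P Pᵀ, hP, Matrix.one_mul]
  rw [h1, h2, Matrix.trace_mul_comm, ← Matrix.mul_assoc, hP, Matrix.one_mul]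


end EY14

open EY14

/-- PSD-constrained Eckart–Young: among symmetric PSD matrices of rank ≤ K, the
Frobenius distance to a symmetric matrix `T = Σ λ_i v_i v_iᵀ` (eigenvalues in
descending order) is minimized by `Σ_{i<K} max(λ_i,0) v_i v_iᵀ`. -/
theorem stmt_14 {N K : ℕ}
    (lam : Fin N → ℝ) (hlam : ∀ i j : Fin N, i ≤ j → lam j ≤ lam i)
    (v : Fin N → (Fin N → ℝ))
    (hv : ∀ i j, v i ⬝ᵥ v j = if i = j then (1 : ℝ) else 0)
    (T : Matrix (Fin N) (Fin N) ℝ)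
    (hT : T = ∑ i, lam i • Matrix.vecMulVec (v i) (v i))
    (Sopt : Matrix (Fin N) (Fin N) ℝ)
    (hSopt : Sopt = ∑ i ∈ Finset.univ.filter (fun i : Fin N => (i : ℕ) < K),
      max (lam i) 0 • Matrix.vecMulVec (v i) (v i)) :
    Sopt.PosSemidef ∧ Sopt.rank ≤ K ∧
    ∀ S : Matrix (Fin N) (Fin N) ℝ, S.PosSemidef → S.rank ≤ K →
      ((Sopt - T)ᵀ * (Sopt - T)).trace ≤ ((S - T)ᵀ * (S - T)).trace := by
  classical
  set P : Matrix (Fin N) (Fin N) ℝ := Matrix.of (fun i j => v i j) with hPdef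
  have hP1 : P * Pᵀ = 1 := by
    ext i j
    have h := hv i j
    simp only [dotProduct] at h
    simpa [Matrix.mul_apply, Matrix.one_apply, hPdef] using h
  have hP2 : Pᵀ * P = 1 := mul_eq_one_comm.mp hP1
  set d : Fin N → ℝ := fun i => if (i : ℕ) < K then max (lam i) 0 else 0 with hd
  have hTd : T = Pᵀ * Matrix.diagonal lam * P := by
    rw [hT, sum_smul_vecMulVec]
  have hSd : Sopt = Pᵀ * Matrix.diagonal d * P := by
    rw [hSopt, ← sum_smul_vecMulVec, Finset.sum_filter]
    refine Finset.sum_congr rfl fun i _ => ?_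
    by_cases h : (i : ℕ) < K
    · simp [hd, h]
    · simp [hd, h]
  have hdnn : ∀ i, 0 ≤ d i := by
    intro i
    by_cases h : (i : ℕ) < K
    · simp [hd, h, le_max_right]
    · simp [hd, h]
  have hDpsd : (Matrix.diagonal d).PosSemidef := Matrix.posSemidef_diagonal_iff.mpr hdnn
  have hPT : Pᴴ = Pᵀ := Matrix.conjTranspose_eq_transpose_of_trivial P
  have hSoptPsd : Sopt.PosSemidef := by
    rw [hSd, ← hPT]
    exact hDpsd.conjTranspose_mul_mul_same P
  have hSoptRank : Sopt.rank ≤ K := by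
    rw [hSd]
    have h1 : (Pᵀ * Matrix.diagonal d * P).rank ≤ (Pᵀ * Matrix.diagonal d).rank :=
      Matrix.rank_mul_le_left _ _
    have h2 : (Pᵀ * Matrix.diagonal d).rank ≤ (Matrix.diagonal d).rank :=
      Matrix.rank_mul_le_right _ _
    have h3 : (Matrix.diagonal d).rank = Fintype.card {i // d i ≠ 0} :=
      Matrix.rank_diagonal d
    have h4 : Fintype.card {i // d i ≠ 0} ≤ K := by
      have : Fintype.card {i // d i ≠ 0} ≤ Fintype.card (Fin K) := by
        refine Fintype.card_le_of_injective
          (fun x => ⟨(x.1 : ℕ), ?_⟩) ?_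
        · by_contra hc
          exact x.2 (by simp [hd, hc])
        · intro x y hxy
          apply Subtype.ext
          apply Fin.ext
          simpa using congrArg Fin.val hxy
      simpa using this
    omega
  refine ⟨hSoptPsd, hSoptRank, ?_⟩
  intro S hS hSK
  -- value at Sopt
  have hSoptT : Sopt - T = Pᵀ * Matrix.diagonal (fun i => d i - lam i) * P := by
    rw [hSd, hTd, ← Matrix.sub_mul, ← Matrix.mul_sub, Matrix.diagonal_sub]
  have hval : ((Sopt - T)ᵀ * (Sopt - T)).trace = ∑ i, (d i - lam i)^2 := by
    rw [hSoptT, trace_conj hP1, trace_tmul]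
    refine Finset.sum_congr rfl fun a _ => ?_
    rw [Finset.sum_eq_single a]
    · simp [Matrix.diagonal_apply]
    · intro b _ hb
      simp [Matrix.diagonal_apply, Ne.symm hb]
    · intro h
      exact absurd (Finset.mem_univ a) h
  -- general S
  set M : Matrix (Fin N) (Fin N) ℝ := P * S * Pᵀ with hM
  have hMpsd : M.PosSemidef := by
    rw [hM, ← hPT]
    exact hS.mul_mul_conjTranspose_same P
  have hMrank : M.rank ≤ K := by
    have h1 : (P * S * Pᵀ).rank ≤ (P * S).rank := Matrix.rank_mul_le_left _ _
    have h2 : (P * S).rank ≤ S.rank := Matrix.rank_mul_le_right _ _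
    rw [hM]
    omega
  have hSM : S = Pᵀ * M * P := by
    rw [hM]
    simp only [Matrix.mul_assoc]
    rw [← Matrix.mul_assoc Pᵀ P, hP2, Matrix.one_mul, Matrix.mul_one]
  have hST : S - T = Pᵀ * (M - Matrix.diagonal lam) * P := by
    rw [hSM, hTd, ← Matrix.sub_mul, ← Matrix.mul_sub]
  have hvalS : ((S - T)ᵀ * (S - T)).trace
      = ((M - Matrix.diagonal lam)ᵀ * (M - Matrix.diagonal lam)).trace := by
    rw [hST, trace_conj hP1]
  rw [hval, hvalS]
  have hfin := spectral_lower_bound lam hlam M hMpsd hMrank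
  calc ∑ i, (d i - lam i)^2
      = ∑ i : Fin N, ((if (i : ℕ) < K then max (lam i) 0 else 0) - lam i)^2 := by
        exact Finset.sum_congr rfl fun i _ => by rw [hd]
    _ ≤ _ := hfin
end
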